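/- arXiv:1612.08471 — 2 statements merged into one kernel-verified Lean document; each statement's English description precedes it below -/
import Mathlib

section
/- Repeated application of the Casimir operator 𝒟 = (1−z)² z ∂_z² + (1−z)² ∂_z to the power function z^a gives 𝒟ⁿ z^a = (a−n+1)ₙ² z^{a−n} (1 + O(z)) as z → 0; in particular the coefficient of the leading power z^{a−n} in 𝒟ⁿ z^a is the square of the Pochhammer symbol (a−n+1)ₙ = Γ(a+1)/Γ(a−n+1). -/
open Polynomial Asymptotics

/-- The SL(2,ℝ) Casimir operator `𝒟 = (1-z)² z ∂_z² + (1-z)² ∂_z`. -/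
noncomputable def casimirD (f : ℝ → ℝ) : ℝ → ℝ :=
  fun z => (1 - z) ^ 2 * z * deriv (deriv f) z + (1 - z) ^ 2 * deriv f z

namespace CasimirAux

noncomputable def stepQ (b : ℝ) (P : ℝ[X]) : ℝ[X] := C b * P + X * derivative P

noncomputable def stepR (b : ℝ) (P : ℝ[X]) : ℝ[X] :=
  (1 - X) ^ 2 * (C b * stepQ b P + X * derivative (stepQ b P))

lemma coeff_zero_stepR (b : ℝ) (P : ℝ[X]) : (stepR b P).coeff 0 = b ^ 2 * P.coeff 0 := by
  simp [stepR, stepQ, pow_two, mul_coeff_zero, coeff_add, coeff_sub]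
  ring

lemma deriv_rpow_mul (b : ℝ) (P : ℝ[X]) {z : ℝ} (hz : 0 < z) :
    deriv (fun w : ℝ => w ^ b * P.eval w) z = z ^ (b - 1) * (stepQ b P).eval z := by
  have h1 : HasDerivAt (fun w : ℝ => w ^ b) (b * z ^ (b - 1)) z :=
    Real.hasDerivAt_rpow_const (Or.inl hz.ne')
  have h2 : HasDerivAt (fun w : ℝ => P.eval w) (P.derivative.eval z) z :=
    P.hasDerivAt z
  rw [(show HasDerivAt (fun w : ℝ => w ^ b * P.eval w) _ z from h1.mul h2).deriv]
  have hzb : z ^ b = z ^ (b - 1) * z := by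
    rw [← Real.rpow_add_one hz.ne']; ring_nf
  simp only [stepQ, eval_add, eval_mul, eval_C, eval_X, hzb]
  ring

lemma casimirD_congr {f g : ℝ → ℝ} (h : ∀ w ∈ Set.Ioi (0 : ℝ), f w = g w) {z : ℝ}
    (hz : 0 < z) : casimirD f z = casimirD g z := by
  have hfg : ∀ w ∈ Set.Ioi (0 : ℝ), deriv f w = deriv g w := fun w hw =>
    Filter.EventuallyEq.deriv_eq (Filter.eventually_of_mem (isOpen_Ioi.mem_nhds hw) h)
  have h1 : deriv f z = deriv g z := hfg z hz
  have h2 : deriv (deriv f) z = deriv (deriv g) z :=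
    Filter.EventuallyEq.deriv_eq (Filter.eventually_of_mem (isOpen_Ioi.mem_nhds hz) hfg)
  simp [casimirD, h1, h2]

lemma casimirD_rpow_mul (b : ℝ) (P : ℝ[X]) {z : ℝ} (hz : 0 < z) :
    casimirD (fun w : ℝ => w ^ b * P.eval w) z = z ^ (b - 1) * (stepR b P).eval z := by
  set f := fun w : ℝ => w ^ b * P.eval w with hf
  have hderiv : ∀ w ∈ Set.Ioi (0 : ℝ), deriv f w = w ^ (b - 1) * (stepQ b P).eval w :=
    fun w hw => deriv_rpow_mul b P hw
  have h2 : deriv (deriv f) z = deriv (fun w => w ^ (b - 1) * (stepQ b P).eval w) z :=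
    Filter.EventuallyEq.deriv_eq (Filter.eventually_of_mem (isOpen_Ioi.mem_nhds hz) hderiv)
  rw [casimirD, h2, deriv_rpow_mul _ _ hz, hderiv z hz]
  have hzb : z ^ (b - 1) = z ^ (b - 1 - 1) * z := by
    rw [← Real.rpow_add_one hz.ne']; ring_nf
  simp only [stepR, stepQ, eval_add, eval_mul, eval_C, eval_X, eval_pow, eval_sub, eval_one,
    derivative_add, derivative_mul, derivative_C, derivative_X, hzb]
  ring

lemma iterate_eq (a : ℝ) (n : ℕ) : ∃ P : ℝ[X],
    P.coeff 0 = ((ascPochhammer ℝ n).eval (a - n + 1)) ^ 2 ∧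
    ∀ z ∈ Set.Ioi (0 : ℝ), casimirD^[n] (fun w : ℝ => w ^ a) z = z ^ (a - n) * P.eval z := by
  induction n with
  | zero => exact ⟨1, by simp, fun z hz => by simp⟩
  | succ n ih =>
    obtain ⟨P, hc, hP⟩ := ih
    refine ⟨stepR (a - n) P, ?_, ?_⟩
    · rw [coeff_zero_stepR, hc]
      have hpoch : (ascPochhammer ℝ (n + 1)).eval (a - ((n : ℕ) + 1 : ℕ) + 1)
          = (a - n) * (ascPochhammer ℝ n).eval (a - n + 1) := by
        rw [ascPochhammer_succ_left]
        push_cast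
        simp only [eval_mul, eval_X, eval_comp, eval_add, eval_one]
        ring_nf
      rw [hpoch]
      ring
    · intro z hz
      rw [Function.iterate_succ_apply',
        casimirD_congr (fun w hw => hP w hw) hz, casimirD_rpow_mul _ _ hz]
      have : a - (n + 1 : ℕ) = a - n - 1 := by push_cast; ring
      rw [this]

end CasimirAux

/-- `𝒟ⁿ z^a = ((a-n+1)ₙ)² z^{a-n} (1 + O(z))` as `z → 0⁺`. -/
theorem casimirD_iterate_rpow (a : ℝ) (n : ℕ) :
    (fun z : ℝ => (casimirD^[n] (fun w => w ^ a)) z -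
        ((ascPochhammer ℝ n).eval (a - n + 1)) ^ 2 * z ^ (a - n))
      =O[nhdsWithin 0 (Set.Ioi 0)] fun z : ℝ => z ^ (a - n + 1) := by
  obtain ⟨P, hc, hP⟩ := CasimirAux.iterate_eq a n
  have hEq : (fun z : ℝ => (casimirD^[n] (fun w => w ^ a)) z -
      ((ascPochhammer ℝ n).eval (a - n + 1)) ^ 2 * z ^ (a - n))
      =ᶠ[nhdsWithin 0 (Set.Ioi 0)]
      fun z : ℝ => z ^ (a - n + 1) * (P.divX).eval z := by
    filter_upwards [self_mem_nhdsWithin] with z hz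
    have hz' : (0 : ℝ) < z := hz
    have hdiv : P.eval z = z * (P.divX).eval z + P.coeff 0 := by
      have h := congrArg (Polynomial.eval z) (Polynomial.X_mul_divX_add P)
      simp only [eval_add, eval_mul, eval_X, eval_C] at h
      linarith
    rw [hP z hz, hdiv, ← hc, Real.rpow_add_one hz'.ne']
    ring
  refine hEq.trans_isBigO ?_
  have hbound : (fun z : ℝ => (P.divX).eval z) =O[nhdsWithin 0 (Set.Ioi 0)]
      (fun _ : ℝ => (1 : ℝ)) := by
    apply Filter.Tendsto.isBigO_one
    exact ((P.divX).continuous_aeval.tendsto 0).mono_left nhdsWithin_le_nhds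
  calc (fun z : ℝ => z ^ (a - n + 1) * (P.divX).eval z)
      =O[nhdsWithin 0 (Set.Ioi 0)] fun z : ℝ => z ^ (a - n + 1) * 1 :=
        (isBigO_refl _ _).mul hbound
    _ = fun z : ℝ => z ^ (a - n + 1) := by funext z; ring
end

section
/- The alternating one-dimensional Mean Field Theory identity: for Δ > 0 and 0 < z < 1, ∑_{ℓ=0}^∞ (−1)^ℓ [(Δ)_ℓ² / (ℓ! (ℓ+2Δ−1)_ℓ)] · k_{2Δ+2ℓ}(z) = z^Δ. -/
open Polynomial

/-- Gauss hypergeometric function `₂F₁(a,b;c;z)` as a power series sum. -/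
noncomputable def hyp2F1 (a b c z : ℝ) : ℝ :=
  ∑' n : ℕ, ((ascPochhammer ℝ n).eval a * (ascPochhammer ℝ n).eval b /
    (ascPochhammer ℝ n).eval c) * z ^ n / n.factorial

/-- The SL(2,ℝ) conformal block `k_{2h}(z) = z^h ₂F₁(h,h;2h;z)`. -/
noncomputable def sl2Block (h z : ℝ) : ℝ := z ^ h * hyp2F1 h h (2 * h) z

open Polynomial Finset Filter

noncomputable def pp (n : ℕ) (y : ℝ) : ℝ := (ascPochhammer ℝ n).eval y

lemma pp_zero (y : ℝ) : pp 0 y = 1 := by simp [pp]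

lemma pp_succ (n : ℕ) (y : ℝ) : pp (n+1) y = pp n y * (y + n) :=
  ascPochhammer_succ_eval n y

lemma pp_add (a b : ℕ) (y : ℝ) : pp (a+b) y = pp a y * pp b (y + a) := by
  have h := congrArg (eval y) (ascPochhammer_mul ℝ a b)
  simpa [pp, eval_comp] using h.symm

lemma pp_pos {n : ℕ} {y : ℝ} (hy : 0 < y) : 0 < pp n y := ascPochhammer_pos n y hy

lemma pp_nonneg {n : ℕ} {y : ℝ} (hy : 0 ≤ y) : 0 ≤ pp n y := by
  induction n with
  | zero => simp [pp_zero]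
  | succ n ih => rw [pp_succ]; positivity

lemma pp_mono {n : ℕ} {a b : ℝ} (ha : 0 ≤ a) (hab : a ≤ b) : pp n a ≤ pp n b := by
  induction n with
  | zero => simp [pp_zero]
  | succ n ih =>
    rw [pp_succ, pp_succ]
    have := pp_nonneg (n := n) ha
    have hb : 0 ≤ b := le_trans ha hab
    have hn : (0:ℝ) ≤ n := Nat.cast_nonneg n
    exact mul_le_mul ih (by linarith) (by linarith) (pp_nonneg hb)

lemma pp_nat (n k : ℕ) : pp n (k : ℝ) = (k.ascFactorial n : ℝ) := by
  rw [pp, ← Nat.cast_ascFactorial]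

/-- Key lower bound for Pochhammer at `2Δ + j`. -/
lemma pp_LB {Δ : ℝ} (hΔ : 0 < Δ) (j m : ℕ) :
    min (2*Δ) 1 * (((j+m).factorial : ℝ) / ((j.factorial : ℝ) * ((j:ℝ)+(m:ℝ)+1)))
      ≤ pp m (2*Δ + (j:ℝ)) := by
  have hc1 : min (2*Δ) 1 ≤ 1 := min_le_right _ _
  have hc2 : min (2*Δ) 1 ≤ 2*Δ := min_le_left _ _
  have hcpos : 0 < min (2*Δ) 1 := lt_min (by linarith) one_pos
  match j, m with
  | 0, 0 => simpa [pp_zero] using by linarith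
  | 0, (m+1) =>
    have h1 : pp (m+1) (2*Δ) = 2*Δ * pp m (2*Δ + 1) := by
      have := pp_add 1 m (2*Δ)
      simpa [pp_succ, pp_zero, add_comm 1 m] using this
    have h2 : (m.factorial : ℝ) ≤ pp m (2*Δ + 1) := by
      have : pp m ((1:ℕ):ℝ) ≤ pp m (2*Δ + 1) := pp_mono (by norm_num) (by push_cast; linarith)
      rw [pp_nat, Nat.one_ascFactorial] at this
      simpa using this
    have h3 : min (2*Δ) 1 * (((m+1).factorial : ℝ) / (((0:ℕ).factorial : ℝ) * ((0:ℝ)+(m+1:ℕ)+1)))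
        ≤ 2*Δ * (m.factorial : ℝ) := by
      simp only [Nat.factorial_zero, Nat.cast_one, one_mul]
      rw [← mul_div_assoc, div_le_iff₀ (by push_cast; positivity)]
      have hf : ((m+1).factorial : ℝ) = ((m:ℝ)+1) * m.factorial := by
        rw [Nat.factorial_succ]; push_cast; ring
      rw [hf]
      have hm : (0:ℝ) ≤ m := Nat.cast_nonneg m
      have hfm : (0:ℝ) ≤ m.factorial := Nat.cast_nonneg _
      push_cast
      nlinarith [mul_nonneg hfm hm]
    calc min (2*Δ) 1 * ((((0:ℕ)+(m+1)).factorial : ℝ) / (((0:ℕ).factorial:ℝ) * (((0:ℕ):ℝ)+((m+1:ℕ):ℝ)+1)))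
        = min (2*Δ) 1 * (((m+1).factorial : ℝ) / (((0:ℕ).factorial : ℝ) * ((0:ℝ)+(m+1:ℕ)+1))) := by
          norm_num
      _ ≤ 2*Δ * (m.factorial:ℝ) := h3
      _ ≤ pp (m+1) (2*Δ) := by rw [h1]; nlinarith
      _ = pp (m+1) (2*Δ + ((0:ℕ):ℝ)) := by norm_num
  | (j+1), m =>
    have h1 : pp m (((j+1:ℕ)):ℝ) ≤ pp m (2*Δ + ((j+1:ℕ):ℝ)) := by
      refine pp_mono (Nat.cast_nonneg _) ?_
      linarith
    rw [pp_nat] at h1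
    have h2 : (j.factorial : ℝ) * ((j+1).ascFactorial m : ℝ) = ((j+m).factorial : ℝ) := by
      rw [← Nat.cast_mul, Nat.factorial_mul_ascFactorial]
    have hjf : (0:ℝ) < j.factorial := by exact_mod_cast j.factorial_pos
    have hasc : ((j+1).ascFactorial m : ℝ) = ((j+m).factorial : ℝ) / j.factorial := by
      field_simp; linarith [h2]
    have key : min (2*Δ) 1 * ((((j+1)+m).factorial : ℝ) / (((j+1).factorial : ℝ) * (((j+1:ℕ):ℝ)+(m:ℝ)+1)))
        ≤ ((j+m).factorial : ℝ) / j.factorial := by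
      rw [← mul_div_assoc, div_le_div_iff₀ (by push_cast; positivity) hjf]
      have e1 : (((j+1)+m).factorial : ℝ) = ((j:ℝ)+(m:ℝ)+1) * (j+m).factorial := by
        have e : (j+1)+m = (j+m)+1 := by ring
        rw [e, Nat.factorial_succ]; push_cast; ring
      have e2 : ((j+1).factorial : ℝ) = ((j:ℝ)+1) * j.factorial := by
        rw [Nat.factorial_succ]; push_cast; ring
      rw [e1, e2]
      have hm : (0:ℝ) ≤ m := Nat.cast_nonneg m
      have hjj : (0:ℝ) ≤ j := Nat.cast_nonneg j
      have hfm : (0:ℝ) ≤ (j+m).factorial := Nat.cast_nonneg _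
      push_cast
      nlinarith [mul_nonneg (mul_nonneg hfm hjj) hjf.le,
        mul_nonneg hfm hjf.le,
        mul_nonneg (mul_nonneg hfm hm) hjf.le]
    calc min (2*Δ) 1 * ((((j+1)+m).factorial : ℝ) / (((j+1).factorial : ℝ) * (((j+1:ℕ):ℝ)+(m:ℝ)+1)))
        ≤ ((j+m).factorial : ℝ) / j.factorial := key
      _ = ((j+1).ascFactorial m : ℝ) := hasc.symm
      _ ≤ pp m (2*Δ + ((j+1:ℕ):ℝ)) := h1

lemma pp_one (y : ℝ) : pp 1 y = y := by simp [pp, ascPochhammer_one]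

lemma choose_fact_1 (ℓ n : ℕ) :
    ((ℓ+n).choose (ℓ+1) : ℝ) * ((ℓ+1).factorial * n.factorial) = n * (ℓ+n).factorial := by
  cases n with
  | zero =>
    have h0 : (ℓ+0).choose (ℓ+1) = 0 := Nat.choose_eq_zero_of_lt (by omega)
    rw [h0]; simp
  | succ n' =>
    have h := Nat.choose_mul_factorial_mul_factorial (show ℓ+1 ≤ ℓ+(n'+1) by omega)
    have hsub : (ℓ+(n'+1)) - (ℓ+1) = n' := by omega
    rw [hsub] at h
    have hfact : (n'+1).factorial = (n'+1) * n'.factorial := Nat.factorial_succ n'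
    push_cast [← h, hfact]
    ring
lemma choose_fact_2 (ℓ n : ℕ) :
    ((ℓ+n).choose ℓ : ℝ) * ((ℓ+1).factorial * n.factorial) = (ℓ+1) * (ℓ+n).factorial := by
  have h := Nat.choose_mul_factorial_mul_factorial (show ℓ ≤ ℓ+n by omega)
  have hsub : (ℓ+n) - ℓ = n := by omega
  rw [hsub] at h
  have hfact : (ℓ+1).factorial = (ℓ+1) * ℓ.factorial := Nat.factorial_succ ℓ
  push_cast [← h, hfact]
  ring

/-- The partial-fraction/telescoping key identity. -/
lemma key_identity {Δ : ℝ} (hΔ : 0 < Δ) (ℓ n : ℕ) :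
    ((ℓ+n+1).factorial : ℝ) /
      ((ℓ+1).factorial * n.factorial * (pp (ℓ+1) (2*Δ + ℓ) * pp n (2*Δ + (2*ℓ+2))))
      = ((ℓ+n).choose (ℓ+1) : ℝ) / pp (ℓ+n+1) (2*Δ + (ℓ+1))
        + ((ℓ+n).choose ℓ : ℝ) / pp (ℓ+n+1) (2*Δ + ℓ) := by
  rw [show 2*Δ + (2*(ℓ:ℝ)+2) = (2*Δ+(ℓ:ℝ)) + ((ℓ:ℝ)+2) from by ring,
      show 2*Δ + ((ℓ:ℝ)+1) = (2*Δ+(ℓ:ℝ)) + 1 from by ring]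
  set y : ℝ := 2*Δ + ℓ with hy
  have hℓ0 : (0:ℝ) ≤ ℓ := Nat.cast_nonneg ℓ
  have hy0 : 0 < y := by rw [hy]; linarith
  set A : ℝ := pp (ℓ+1) y with hA
  set B : ℝ := pp n (y + ((ℓ:ℝ)+2)) with hB
  set E : ℝ := pp (ℓ+n+1) y with hE
  set E' : ℝ := pp (ℓ+n+1) (y+1) with hE'
  set Q : ℝ := pp (ℓ+n+2) y with hQ
  have hApos : 0 < A := pp_pos hy0
  have hBpos : 0 < B := pp_pos (by linarith)
  have hEpos : 0 < E := pp_pos hy0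
  have hE'pos : 0 < E' := pp_pos (by linarith)
  have hQpos : 0 < Q := pp_pos hy0
  have hq1 : y * E' = Q := by
    have h := pp_add 1 (ℓ+n+1) y
    rw [show 1 + (ℓ+n+1) = ℓ+n+2 from by ring, pp_one] at h
    rw [hQ, h, hE']
    norm_num
  have hq2 : (y + ((ℓ:ℝ)+(n:ℝ)+1)) * E = Q := by
    have h := pp_succ (ℓ+n+1) y
    rw [hQ, show ℓ+n+2 = (ℓ+n+1)+1 from by ring, h, hE]
    push_cast; ring
  have hq3 : (A * B) * (y + ((ℓ:ℝ)+1)) = Q := by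
    have h1 := pp_add (ℓ+1) (n+1) y
    rw [show (ℓ+1) + (n+1) = ℓ+n+2 from by ring] at h1
    push_cast at h1
    have h2 := pp_add 1 n (y + ((ℓ:ℝ)+1))
    rw [show 1 + n = n+1 from by ring, pp_one] at h2
    rw [show y + ((ℓ:ℝ)+1) + ((1:ℕ):ℝ) = y + ((ℓ:ℝ)+2) from by push_cast; ring] at h2
    rw [hQ, h1, h2, hA, hB]
    ring
  have hfact : ((ℓ+n+1).factorial : ℝ) = ((ℓ:ℝ)+(n:ℝ)+1) * (ℓ+n).factorial := by
    rw [show ℓ+n+1 = (ℓ+n)+1 from rfl, Nat.factorial_succ]; push_cast; ring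
  set c₁ : ℝ := ((ℓ+n).choose (ℓ+1) : ℝ) with hc₁
  set c₂ : ℝ := ((ℓ+n).choose ℓ : ℝ) with hc₂
  set K : ℝ := ((ℓ+1).factorial : ℝ) * (n.factorial : ℝ) with hK
  have h1 : c₁ * K = (n:ℝ) * (ℓ+n).factorial := by
    rw [hc₁, hK]; exact choose_fact_1 ℓ n
  have h2 : c₂ * K = ((ℓ:ℝ)+1) * (ℓ+n).factorial := by
    rw [hc₂, hK]; exact choose_fact_2 ℓ n
  have sc : ((ℓ+n+1).factorial : ℝ) * (y + ((ℓ:ℝ)+1)) =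
      K * (c₁ * y + c₂ * (y + ((ℓ:ℝ)+(n:ℝ)+1))) := by
    linear_combination (y+((ℓ:ℝ)+1))*hfact - y*h1 - (y+((ℓ:ℝ)+(n:ℝ)+1))*h2
  have goal2 : (((ℓ+n+1).factorial : ℝ)) * (E' * E)
      = (c₁ * E + c₂ * E') * (K * (A * B)) := by
    apply mul_left_cancel₀
      (show (y * (y + ((ℓ:ℝ)+(n:ℝ)+1)) * (y + ((ℓ:ℝ)+1))) ≠ 0 from by positivity)
    calc y * (y + ((ℓ:ℝ)+(n:ℝ)+1)) * (y + ((ℓ:ℝ)+1)) * (((ℓ+n+1).factorial : ℝ) * (E' * E))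
        = ((ℓ+n+1).factorial : ℝ) * (y + ((ℓ:ℝ)+1)) * ((y * E') * ((y + ((ℓ:ℝ)+(n:ℝ)+1)) * E)) := by
          ring
      _ = ((ℓ+n+1).factorial : ℝ) * (y + ((ℓ:ℝ)+1)) * (Q * Q) := by rw [hq1, hq2]
      _ = K * (c₁ * y + c₂ * (y + ((ℓ:ℝ)+(n:ℝ)+1))) * (Q * Q) := by rw [← sc]
      _ = K * (c₁ * (((y + ((ℓ:ℝ)+(n:ℝ)+1)) * E) * ((A*B) * (y + ((ℓ:ℝ)+1)))) * y
            + c₂ * ((y * E') * ((A*B) * (y + ((ℓ:ℝ)+1)))) * (y + ((ℓ:ℝ)+(n:ℝ)+1))) := by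
          rw [hq1, hq2, hq3]; ring
      _ = y * (y + ((ℓ:ℝ)+(n:ℝ)+1)) * (y + ((ℓ:ℝ)+1)) * ((c₁ * E + c₂ * E') * (K * (A * B))) := by
          ring
  rw [div_add_div _ _ (ne_of_gt hE'pos) (ne_of_gt hEpos),
    div_eq_div_iff (by positivity) (by positivity)]
  linear_combination goal2

/-- summand of the diagonal (coefficient) sum -/
noncomputable def sTerm (Δ : ℝ) (ℓ n : ℕ) : ℝ :=
  (-1)^ℓ / (ℓ.factorial * n.factorial * pp ℓ (2*Δ + ℓ - 1) * pp n (2*Δ + 2*ℓ))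

lemma diag_step {Δ : ℝ} (hΔ : 0 < Δ) (ℓ n : ℕ) :
    sTerm Δ (ℓ+1) n
      = (-1)^(ℓ+1) * ((ℓ+n).choose (ℓ+1) : ℝ) / (pp (ℓ+n+1) (2*Δ + (ℓ+1)) * (ℓ+n+1).factorial)
        - (-1)^ℓ * ((ℓ+n).choose ℓ : ℝ) / (pp (ℓ+n+1) (2*Δ + ℓ) * (ℓ+n+1).factorial) := by
  have hk := key_identity hΔ ℓ n
  have hℓ0 : (0:ℝ) ≤ ℓ := Nat.cast_nonneg ℓ
  have hA : (0:ℝ) < pp (ℓ+1) (2*Δ + ℓ) := pp_pos (by linarith)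
  have hB : (0:ℝ) < pp n (2*Δ + (2*ℓ+2)) := pp_pos (by linarith)
  have hE' : (0:ℝ) < pp (ℓ+n+1) (2*Δ + (ℓ+1)) := pp_pos (by linarith)
  have hE : (0:ℝ) < pp (ℓ+n+1) (2*Δ + ℓ) := pp_pos (by linarith)
  have hfl : (0:ℝ) < (ℓ+1).factorial := by exact_mod_cast (ℓ+1).factorial_pos
  have hfn : (0:ℝ) < n.factorial := by exact_mod_cast n.factorial_pos
  have hfm : (0:ℝ) < (ℓ+n+1).factorial := by exact_mod_cast (ℓ+n+1).factorial_pos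
  have harg1 : 2*Δ + ((ℓ+1:ℕ):ℝ) - 1 = 2*Δ + ℓ := by push_cast; ring
  have harg2 : 2*Δ + 2*((ℓ+1:ℕ):ℝ) = 2*Δ + (2*ℓ+2) := by push_cast; ring
  rw [sTerm, harg1, harg2]
  have hsign : ((-1:ℝ))^(ℓ+1) = -((-1:ℝ))^ℓ := by ring
  rw [hsign]
  field_simp
  field_simp at hk
  -- hk : (ℓ+n+1)! * (E' * E) = (c₁ * E + c₂ * E') * ((ℓ+1)! * n! * (A * B)) (some arrangement)
  linear_combination (-1:ℝ) * hk

lemma diag_sum_zero {Δ : ℝ} (hΔ : 0 < Δ) (M : ℕ) :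
    ∑ ℓ ∈ range (M+2), sTerm Δ ℓ (M+1-ℓ) = 0 := by
  set g : ℕ → ℝ := fun ℓ =>
    (-1)^ℓ * ((M.choose ℓ : ℝ)) / (pp (M+1) (2*Δ + ℓ) * (M+1).factorial) with hg
  have hstep : ∀ i ∈ range (M+1), sTerm Δ (i+1) (M+1-(i+1)) = g (i+1) - g i := by
    intro i hi
    have hiM : i ≤ M := by simpa using Nat.lt_succ_iff.mp (mem_range.mp hi)
    have hsub : M+1-(i+1) = M-i := by omega
    have hadd : i + (M-i) = M := by omega
    have := diag_step hΔ i (M-i)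
    rw [hadd] at this
    rw [hsub, this]
    simp only [hg]
    push_cast
    ring
  have hsum1 : ∑ ℓ ∈ range (M+2), sTerm Δ ℓ (M+1-ℓ)
      = (∑ i ∈ range (M+1), (g (i+1) - g i)) + sTerm Δ 0 (M+1) := by
    rw [Finset.sum_range_succ']
    congr 1
    exact Finset.sum_congr rfl hstep
  rw [hsum1, Finset.sum_range_sub g]
  have hg0 : g 0 = sTerm Δ 0 (M+1) := by
    rw [hg, sTerm]
    norm_num [pp_zero]
    ring_nf
  have hgtop : g (M+1) = 0 := by
    have hc : M.choose (M+1) = 0 := Nat.choose_eq_zero_of_lt (Nat.lt_succ_self M)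
    simp [hg, hc]
  rw [hgtop, hg0]
  ring

lemma sTerm_zero {Δ : ℝ} : sTerm Δ 0 0 = 1 := by
  rw [sTerm]; norm_num [pp_zero]

lemma ppl_pos {Δ : ℝ} (hΔ : 0 < Δ) (ℓ : ℕ) : 0 < pp ℓ (2*Δ + ℓ - 1) := by
  cases ℓ with
  | zero => simp [pp_zero]
  | succ j =>
    apply pp_pos
    have : (0:ℝ) ≤ j := Nat.cast_nonneg j
    push_cast
    linarith

lemma pp_LB2 {Δ : ℝ} (hΔ : 0 < Δ) (ℓ : ℕ) :
    min (2*Δ) 1 * ((2*ℓ).factorial : ℝ) / (4*(ℓ+1))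
      ≤ (ℓ.factorial : ℝ) * pp ℓ (2*Δ + ℓ - 1) := by
  have hc1 : min (2*Δ) 1 ≤ 1 := min_le_right _ _
  have hcpos : 0 < min (2*Δ) 1 := lt_min (by linarith) one_pos
  cases ℓ with
  | zero => simp [pp_zero]; linarith
  | succ j =>
    have hlb := pp_LB hΔ j (j+1)
    have harg : 2*Δ + ((j+1:ℕ):ℝ) - 1 = 2*Δ + (j:ℝ) := by push_cast; ring
    rw [harg]
    have hjf : (0:ℝ) < j.factorial := by exact_mod_cast j.factorial_pos
    have hj0 : (0:ℝ) ≤ j := Nat.cast_nonneg j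
    -- (j+1)! * pp ≥ (j+1) * j! * pp ≥ (j+1) * c * (2j+1)!/(2j+2) = c (2j+1)!/2
    have h1 : ((j+1).factorial : ℝ) = ((j:ℝ)+1) * j.factorial := by
      rw [Nat.factorial_succ]; push_cast; ring
    have hppnn : 0 ≤ pp (j+1) (2*Δ + (j:ℝ)) := le_of_lt (pp_pos (by linarith))
    have h2 : ((j:ℝ)+1) * j.factorial * (min (2*Δ) 1 * (((j+(j+1)).factorial : ℝ) / ((j.factorial : ℝ) * ((j:ℝ)+((j+1:ℕ):ℝ)+1))))
        ≤ ((j+1).factorial : ℝ) * pp (j+1) (2*Δ + (j:ℝ)) := by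
      rw [h1]
      apply mul_le_mul_of_nonneg_left _ (by positivity)
      exact_mod_cast hlb
    refine le_trans ?_ h2
    -- c*(2j+2)!/(4(j+2)) ≤ (j+1)*j!*c*(2j+1)!/(j!*(2j+2))
    have e1 : (j+(j+1)) = 2*j+1 := by ring
    rw [e1]
    have e2 : ((2*(j+1)).factorial : ℝ) = (2*(j:ℝ)+2) * (2*j+1).factorial := by
      rw [show 2*(j+1) = (2*j+1)+1 from by ring, Nat.factorial_succ]; push_cast; ring
    rw [e2]
    have hf21 : (0:ℝ) < ((2*j+1).factorial : ℝ) := by exact_mod_cast (2*j+1).factorial_pos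
    rw [div_le_iff₀ (by positivity)]
    have expand : ((j:ℝ)+1) * j.factorial * (min (2*Δ) 1 * (((2*j+1).factorial : ℝ) / ((j.factorial : ℝ) * ((j:ℝ)+((j+1:ℕ):ℝ)+1))))
        = min (2*Δ) 1 * ((2*j+1).factorial : ℝ) * (((j:ℝ)+1)/(2*(j:ℝ)+2)) := by
      push_cast
      field_simp
      ring
    rw [expand]
    have : ((j:ℝ)+1)/(2*(j:ℝ)+2) = 1/2 := by
      rw [div_eq_div_iff (by linarith) (by norm_num)]; ring
    rw [this]
    push_cast
    nlinarith [mul_pos hcpos hf21]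

lemma sTerm_abs {Δ : ℝ} (hΔ : 0 < Δ) (ℓ n : ℕ) :
    |sTerm Δ ℓ n| ≤ (4*((ℓ:ℝ)+n+1)*(2*((ℓ:ℝ)+n)+1)/(min (2*Δ) 1)^2) *
      (1/((n.factorial : ℝ) * ((2*ℓ+n).factorial : ℝ))) := by
  have hc1 : min (2*Δ) 1 ≤ 1 := min_le_right _ _
  have hcpos : 0 < min (2*Δ) 1 := lt_min (by linarith) one_pos
  have hl0 : (0:ℝ) ≤ ℓ := Nat.cast_nonneg ℓ
  have hn0 : (0:ℝ) ≤ n := Nat.cast_nonneg n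
  have hPl := ppl_pos hΔ ℓ
  have hPn : 0 < pp n (2*Δ + 2*ℓ) := pp_pos (by linarith)
  have hlf : (0:ℝ) < ℓ.factorial := by exact_mod_cast ℓ.factorial_pos
  have hnf : (0:ℝ) < n.factorial := by exact_mod_cast n.factorial_pos
  have h2lf : (0:ℝ) < ((2*ℓ).factorial : ℝ) := by exact_mod_cast (2*ℓ).factorial_pos
  have h2lnf : (0:ℝ) < ((2*ℓ+n).factorial : ℝ) := by exact_mod_cast (2*ℓ+n).factorial_pos
  have habs : |sTerm Δ ℓ n|
      = 1 / (ℓ.factorial * n.factorial * pp ℓ (2*Δ + ℓ - 1) * pp n (2*Δ + 2*ℓ)) := by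
    rw [sTerm, abs_div, abs_pow, abs_neg, abs_one, one_pow]
    congr 1
    rw [abs_of_pos (by positivity)]
  rw [habs]
  -- lower bound for denominator
  have hbn := pp_LB hΔ (2*ℓ) n
  have harg : 2*Δ + ((2*ℓ:ℕ):ℝ) = 2*Δ + 2*(ℓ:ℝ) := by push_cast; ring
  rw [harg] at hbn
  have hbl := pp_LB2 hΔ ℓ
  have hD : (min (2*Δ) 1)^2 * ((n.factorial : ℝ) * ((2*ℓ+n).factorial : ℝ))
        / ((4*((ℓ:ℝ)+1)) * (2*(ℓ:ℝ)+(n:ℝ)+1))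
      ≤ ℓ.factorial * n.factorial * pp ℓ (2*Δ + ℓ - 1) * pp n (2*Δ + 2*ℓ) := by
    have e : (ℓ.factorial:ℝ) * n.factorial * pp ℓ (2*Δ + ℓ - 1) * pp n (2*Δ + 2*ℓ)
        = ((ℓ.factorial:ℝ) * pp ℓ (2*Δ + ℓ - 1)) * ((n.factorial:ℝ) * pp n (2*Δ + 2*ℓ)) := by ring
    rw [e]
    have b1 : min (2*Δ) 1 * ((2*ℓ).factorial : ℝ) / (4*(ℓ+1))
        ≤ (ℓ.factorial : ℝ) * pp ℓ (2*Δ + ℓ - 1) := hbl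
    have b2 : (n.factorial:ℝ) * (min (2*Δ) 1 * (((2*ℓ+n).factorial : ℝ) / (((2*ℓ).factorial : ℝ) * (((2*ℓ:ℕ):ℝ)+(n:ℝ)+1))))
        ≤ (n.factorial:ℝ) * pp n (2*Δ + 2*ℓ) :=
      mul_le_mul_of_nonneg_left hbn (le_of_lt hnf)
    calc (min (2*Δ) 1)^2 * ((n.factorial : ℝ) * ((2*ℓ+n).factorial : ℝ))
          / ((4*((ℓ:ℝ)+1)) * (2*(ℓ:ℝ)+(n:ℝ)+1))
        = (min (2*Δ) 1 * ((2*ℓ).factorial : ℝ) / (4*(ℓ+1))) *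
          ((n.factorial:ℝ) * (min (2*Δ) 1 * (((2*ℓ+n).factorial : ℝ) / (((2*ℓ:ℕ):ℝ) * 0 + ((2*ℓ).factorial : ℝ) * (((2*ℓ:ℕ):ℝ)+(n:ℝ)+1))))) := by
          push_cast
          field_simp
          ring
      _ ≤ ((ℓ.factorial : ℝ) * pp ℓ (2*Δ + ℓ - 1)) * ((n.factorial:ℝ) * pp n (2*Δ + 2*ℓ)) := by
          apply mul_le_mul _ _ (by positivity) (by positivity)
          · exact b1
          · rw [show ((2*ℓ:ℕ):ℝ) * 0 + ((2*ℓ).factorial : ℝ) * (((2*ℓ:ℕ):ℝ)+(n:ℝ)+1) = ((2*ℓ).factorial : ℝ) * (((2*ℓ:ℕ):ℝ)+(n:ℝ)+1) from by ring]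
            exact b2
  have hDpos : (0:ℝ) < (min (2*Δ) 1)^2 * ((n.factorial : ℝ) * ((2*ℓ+n).factorial : ℝ))
        / ((4*((ℓ:ℝ)+1)) * (2*(ℓ:ℝ)+(n:ℝ)+1)) := by positivity
  have step1 : 1 / ((ℓ.factorial:ℝ) * n.factorial * pp ℓ (2*Δ + ℓ - 1) * pp n (2*Δ + 2*ℓ))
      ≤ 1 / ((min (2*Δ) 1)^2 * ((n.factorial : ℝ) * ((2*ℓ+n).factorial : ℝ))
        / ((4*((ℓ:ℝ)+1)) * (2*(ℓ:ℝ)+(n:ℝ)+1))) :=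
    one_div_le_one_div_of_le hDpos hD
  refine le_trans step1 ?_
  rw [one_div_div, div_mul_div_comm, mul_one]
  gcongr <;> nlinarith

lemma inv_fact_sum (m : ℕ) :
    ∑ ℓ ∈ range (m+1), (1:ℝ)/(((m-ℓ).factorial : ℝ) * ((m+ℓ).factorial : ℝ))
      ≤ 4^m / ((2*m).factorial : ℝ) := by
  have hterm : ∀ ℓ ∈ range (m+1),
      (1:ℝ)/(((m-ℓ).factorial : ℝ) * ((m+ℓ).factorial : ℝ))
        = ((2*m).choose (m+ℓ) : ℝ) / ((2*m).factorial : ℝ) := by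
    intro ℓ hℓ
    have hlm : ℓ ≤ m := Nat.lt_succ_iff.mp (mem_range.mp hℓ)
    have hle : m+ℓ ≤ 2*m := by omega
    have h := Nat.choose_mul_factorial_mul_factorial hle
    have hsub : 2*m - (m+ℓ) = m-ℓ := by omega
    rw [hsub] at h
    have hf1 : (0:ℝ) < ((m-ℓ).factorial : ℝ) := by exact_mod_cast (m-ℓ).factorial_pos
    have hf2 : (0:ℝ) < ((m+ℓ).factorial : ℝ) := by exact_mod_cast (m+ℓ).factorial_pos
    have hf3 : (0:ℝ) < ((2*m).factorial : ℝ) := by exact_mod_cast (2*m).factorial_pos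
    rw [div_eq_div_iff (by positivity) (ne_of_gt hf3)]
    have : (((2*m).choose (m+ℓ) : ℕ) : ℝ) * (((m+ℓ).factorial : ℕ) : ℝ) * (((m-ℓ).factorial : ℕ) : ℝ) = (((2*m).factorial : ℕ) : ℝ) := by
      exact_mod_cast congrArg (Nat.cast : ℕ → ℝ) h
    linarith [this]
  rw [Finset.sum_congr rfl hterm, ← Finset.sum_div]
  have hf3 : (0:ℝ) < ((2*m).factorial : ℝ) := by exact_mod_cast (2*m).factorial_pos
  gcongr
  have hnat : ∑ ℓ ∈ range (m+1), (2*m).choose (m+ℓ) ≤ 2^(2*m) := by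
    have e1 : ∑ ℓ ∈ range (m+1), (2*m).choose (m+ℓ)
        = ∑ k ∈ Finset.Ico m (2*m+1), (2*m).choose k := by
      rw [Finset.sum_Ico_eq_sum_range]
      have : 2*m+1-m = m+1 := by omega
      rw [this]
    rw [e1]
    calc ∑ k ∈ Finset.Ico m (2*m+1), (2*m).choose k
        ≤ ∑ k ∈ range (2*m+1), (2*m).choose k := by
          apply Finset.sum_le_sum_of_subset
          intro k hk
          simp only [Finset.mem_Ico] at hk
          simp only [Finset.mem_range]
          omega
      _ = 2^(2*m) := Nat.sum_range_choose (2*m)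
  calc ∑ ℓ ∈ range (m+1), ((2*m).choose (m+ℓ) : ℝ)
      = ((∑ ℓ ∈ range (m+1), (2*m).choose (m+ℓ) : ℕ) : ℝ) := by push_cast; rfl
    _ ≤ ((2^(2*m) : ℕ) : ℝ) := by exact_mod_cast hnat
    _ = 4^m := by rw [show (4:ℝ) = 2^2 from by norm_num, ← pow_mul]; push_cast; rfl

lemma diag_abs_bound {Δ : ℝ} (hΔ : 0 < Δ) (m : ℕ) :
    ∑ ℓ ∈ range (m+1), |sTerm Δ ℓ (m-ℓ)|
      ≤ (4*((m:ℝ)+1)*(2*(m:ℝ)+1)/(min (2*Δ) 1)^2) * (4^m / ((2*m).factorial : ℝ)) := by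
  have step : ∀ ℓ ∈ range (m+1), |sTerm Δ ℓ (m-ℓ)|
      ≤ (4*((m:ℝ)+1)*(2*(m:ℝ)+1)/(min (2*Δ) 1)^2) *
        (1/(((m-ℓ).factorial : ℝ) * ((m+ℓ).factorial : ℝ))) := by
    intro ℓ hℓ
    have hlm : ℓ ≤ m := Nat.lt_succ_iff.mp (mem_range.mp hℓ)
    have hcast : (ℓ:ℝ) + ((m-ℓ:ℕ):ℝ) = (m:ℝ) := by
      rw [Nat.cast_sub hlm]; ring
    have h2 : 2*ℓ + (m-ℓ) = m+ℓ := by omega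
    have := sTerm_abs hΔ ℓ (m-ℓ)
    rw [hcast, h2] at this
    exact this
  calc ∑ ℓ ∈ range (m+1), |sTerm Δ ℓ (m-ℓ)|
      ≤ ∑ ℓ ∈ range (m+1), (4*((m:ℝ)+1)*(2*(m:ℝ)+1)/(min (2*Δ) 1)^2) *
        (1/(((m-ℓ).factorial : ℝ) * ((m+ℓ).factorial : ℝ))) := Finset.sum_le_sum step
    _ = (4*((m:ℝ)+1)*(2*(m:ℝ)+1)/(min (2*Δ) 1)^2) *
        ∑ ℓ ∈ range (m+1), (1:ℝ)/(((m-ℓ).factorial : ℝ) * ((m+ℓ).factorial : ℝ)) := by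
        rw [Finset.mul_sum]
    _ ≤ (4*((m:ℝ)+1)*(2*(m:ℝ)+1)/(min (2*Δ) 1)^2) * (4^m / ((2*m).factorial : ℝ)) := by
        apply mul_le_mul_of_nonneg_left (inv_fact_sum m)
        have hΔ2 : (0:ℝ) < min (2*Δ) 1 := lt_min (by linarith) one_pos
        positivity

/-- summability of the ₂F₁(h,h;2h;z) series -/
lemma hyp_summable {h z : ℝ} (hh : 0 < h) (hz0 : 0 < z) (hz1 : z < 1) :
    Summable (fun n : ℕ => (pp n h * pp n h / pp n (2*h)) * z^n / n.factorial) := by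
  set f : ℕ → ℝ := fun n => (pp n h * pp n h / pp n (2*h)) * z^n / n.factorial with hf
  have hfpos : ∀ n, 0 < f n := by
    intro n
    have h1 : 0 < pp n h := pp_pos hh
    have h2 : 0 < pp n (2*h) := pp_pos (by linarith)
    have h3 : (0:ℝ) < n.factorial := by exact_mod_cast n.factorial_pos
    rw [hf]
    positivity
  apply summable_of_ratio_norm_eventually_le hz1
  rw [eventually_atTop]
  refine ⟨⌈h^2⌉₊, fun n hn => ?_⟩
  have hn2 : h^2 ≤ n := le_trans (Nat.le_ceil _) (by exact_mod_cast hn)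
  have h1 : 0 < pp n h := pp_pos hh
  have h2 : 0 < pp n (2*h) := pp_pos (by linarith)
  have h3 : (0:ℝ) < n.factorial := by exact_mod_cast n.factorial_pos
  have hn0 : (0:ℝ) ≤ n := Nat.cast_nonneg n
  have hstep : f (n+1) = f n * ((h+n)*(h+n)*z/((2*h+n)*(n+1))) := by
    rw [hf]
    simp only [pp_succ, Nat.factorial_succ, pow_succ]
    push_cast
    field_simp
  have hq : (h+n)*(h+n)*z/((2*h+n)*(n+1)) ≤ z := by
    rw [div_le_iff₀ (by positivity)]
    nlinarith
  rw [Real.norm_eq_abs, Real.norm_eq_abs, abs_of_pos (hfpos _), abs_of_pos (hfpos _), hstep]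
  calc f n * ((h+n)*(h+n)*z/((2*h+n)*(n+1))) ≤ f n * z :=
        mul_le_mul_of_nonneg_left hq (le_of_lt (hfpos n))
    _ = z * f n := by ring

lemma lin_ratio_tendsto (a b : ℝ) (hb : 0 < b) :
    Tendsto (fun m : ℕ => ((m:ℝ)+a)/((m:ℝ)+b)) atTop (nhds 1) := by
  have h1 : Tendsto (fun m : ℕ => (m:ℝ)+b) atTop atTop :=
    tendsto_atTop_add_const_right atTop b tendsto_natCast_atTop_atTop
  have h2 : Tendsto (fun m : ℕ => (a-b)/((m:ℝ)+b)) atTop (nhds 0) :=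
    Tendsto.div_atTop tendsto_const_nhds h1
  have h3 : Tendsto (fun m : ℕ => 1 + (a-b)/((m:ℝ)+b)) atTop (nhds 1) := by
    simpa using tendsto_const_nhds.add h2
  apply h3.congr'
  rw [EventuallyEq, eventually_atTop]
  refine ⟨0, fun m _ => ?_⟩
  have hm : (0:ℝ) ≤ m := Nat.cast_nonneg m
  field_simp
  ring

/-- summability of the majorant series -/
lemma W_summable {Δ z : ℝ} (hΔ : 0 < Δ) (hz0 : 0 < z) (hz1 : z < 1) :
    Summable (fun m : ℕ =>
      ((m:ℝ)+1)*(2*(m:ℝ)+1)*(pp m Δ)^2*4^m/((2*m).factorial : ℝ) * z^m) := by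
  set f : ℕ → ℝ := fun m => ((m:ℝ)+1)*(2*(m:ℝ)+1)*(pp m Δ)^2*4^m/((2*m).factorial : ℝ) * z^m
    with hf
  have hfpos : ∀ m, 0 < f m := by
    intro m
    have h1 : 0 < pp m Δ := pp_pos hΔ
    have h3 : (0:ℝ) < (2*m).factorial := by exact_mod_cast (2*m).factorial_pos
    rw [hf]
    positivity
  apply summable_of_ratio_test_tendsto_lt_one hz1
  · rw [eventually_atTop]; exact ⟨0, fun m _ => ne_of_gt (hfpos m)⟩
  · have haux : Tendsto (fun m : ℕ =>
        z * ((((m:ℝ)+2)/((m:ℝ)+1)) * (((m:ℝ)+3/2)/((m:ℝ)+1/2)) *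
          ((((m:ℝ)+Δ)/((m:ℝ)+1/2)) * (((m:ℝ)+Δ)/((m:ℝ)+1))))) atTop (nhds z) := by
      have h := ((lin_ratio_tendsto 2 1 one_pos).mul
          (lin_ratio_tendsto (3/2) (1/2) (by norm_num))).mul
        ((lin_ratio_tendsto Δ (1/2) (by norm_num)).mul (lin_ratio_tendsto Δ 1 one_pos))
      have h2 := h.const_mul z
      simpa using h2
    apply haux.congr'
    rw [EventuallyEq, eventually_atTop]
    refine ⟨0, fun m _ => ?_⟩
    have h1 : 0 < pp m Δ := pp_pos hΔ
    have h3 : (0:ℝ) < ((2*m).factorial : ℝ) := by exact_mod_cast (2*m).factorial_pos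
    have hm : (0:ℝ) ≤ m := Nat.cast_nonneg m
    have hzm : (0:ℝ) < z^m := pow_pos hz0 m
    have hfs : f (m+1) = f m * (z * ((((m:ℝ)+2)/((m:ℝ)+1)) * (((m:ℝ)+3/2)/((m:ℝ)+1/2)) *
          ((((m:ℝ)+Δ)/((m:ℝ)+1/2)) * (((m:ℝ)+Δ)/((m:ℝ)+1))))) := by
      rw [hf]
      simp only
      have e1 : 2*(m+1) = (2*m+1)+1 := by ring
      rw [e1, Nat.factorial_succ, Nat.factorial_succ, pp_succ, pow_succ, pow_succ]
      push_cast
      field_simp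
      ring
    rw [Real.norm_eq_abs, Real.norm_eq_abs, abs_of_pos (hfpos _), abs_of_pos (hfpos _), hfs,
      mul_comm (f m), mul_div_assoc, div_self (ne_of_gt (hfpos m)), mul_one]

section Assembly
variable {Δ z : ℝ}

/-- the double-series term -/
noncomputable def dTerm (Δ z : ℝ) (p : ℕ × ℕ) : ℝ :=
  ((-1:ℝ)^p.1 * (pp p.1 Δ ^ 2 / (p.1.factorial * pp p.1 ((p.1:ℝ) + 2*Δ - 1)))) *
    (z ^ (Δ + (p.1:ℝ)) *
      ((pp p.2 (Δ + p.1) * pp p.2 (Δ + p.1) / pp p.2 (2*(Δ + p.1))) * z ^ p.2 / p.2.factorial))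

lemma dTerm_fiber_hasSum (hΔ : 0 < Δ) (hz0 : 0 < z) (hz1 : z < 1) (ℓ : ℕ) :
    HasSum (fun n => dTerm Δ z (ℓ, n))
      ((-1:ℝ)^ℓ * (pp ℓ Δ ^ 2 / (ℓ.factorial * pp ℓ ((ℓ:ℝ) + 2*Δ - 1))) *
        sl2Block (Δ + ℓ) z) := by
  have hh : 0 < Δ + (ℓ:ℝ) := by have : (0:ℝ) ≤ ℓ := Nat.cast_nonneg ℓ; linarith
  have hs := (hyp_summable hh hz0 hz1).hasSum
  have h2 := (hs.mul_left (z ^ (Δ + (ℓ:ℝ)))).mul_left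
    ((-1:ℝ)^ℓ * (pp ℓ Δ ^ 2 / (ℓ.factorial * pp ℓ ((ℓ:ℝ) + 2*Δ - 1))))
  convert h2 using 1
  all_goals rfl

lemma dTerm_eq (hz0 : 0 < z) (ℓ n : ℕ) :
    dTerm Δ z (ℓ, n) = pp (ℓ+n) Δ ^ 2 * (z ^ Δ * z ^ (ℓ+n)) * sTerm Δ ℓ n := by
  rw [dTerm, sTerm]
  have hrp : z ^ (Δ + (ℓ:ℝ)) = z ^ Δ * z ^ ℓ := by
    rw [Real.rpow_add hz0, Real.rpow_natCast]
  have hnum : pp (ℓ+n) Δ = pp ℓ Δ * pp n (Δ + ℓ) := pp_add ℓ n Δ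
  have harg1 : (ℓ:ℝ) + 2*Δ - 1 = 2*Δ + ℓ - 1 := by ring
  have harg2 : 2*(Δ + (ℓ:ℝ)) = 2*Δ + 2*ℓ := by ring
  rw [hrp, hnum, harg1, harg2, pow_add]
  ring

set_option maxHeartbeats 1000000 in
lemma dTerm_abs_summable (hΔ : 0 < Δ) (hz0 : 0 < z) (hz1 : z < 1) :
    Summable (fun p : ℕ × ℕ => |dTerm Δ z p|) := by
  rw [← Finset.HasAntidiagonal.sigmaAntidiagonalEquivProd.summable_iff]
  apply (summable_sigma_of_nonneg (fun x => abs_nonneg _)).mpr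
  constructor
  · intro m
    exact (hasSum_fintype _).summable
  · refine Summable.of_nonneg_of_le (fun m => tsum_nonneg (fun c => abs_nonneg _)) ?_
      (((W_summable hΔ hz0 hz1).mul_left (4 * z ^ Δ / (min (2*Δ) 1)^2)))
    intro m
    have e1 : ∑' (c : (Finset.HasAntidiagonal.antidiagonal m : Finset (ℕ×ℕ))),
          |dTerm Δ z (Finset.HasAntidiagonal.sigmaAntidiagonalEquivProd ⟨m, c⟩)|
        = ∑ p ∈ Finset.HasAntidiagonal.antidiagonal m, |dTerm Δ z p| := by
      rw [← Finset.tsum_subtype]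
      rfl
    rw [e1, Finset.Nat.sum_antidiagonal_eq_sum_range_succ_mk]
    have e2 : ∀ ℓ ∈ range (m+1), |dTerm Δ z (ℓ, m-ℓ)|
        = pp m Δ ^ 2 * (z ^ Δ * z ^ m) * |sTerm Δ ℓ (m-ℓ)| := by
      intro ℓ hℓ
      have hlm : ℓ ≤ m := Nat.lt_succ_iff.mp (mem_range.mp hℓ)
      have hadd : ℓ + (m-ℓ) = m := by omega
      rw [dTerm_eq hz0, hadd, abs_mul]
      have hpos : (0:ℝ) < pp m Δ ^ 2 * (z ^ Δ * z ^ m) := by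
        have := pp_pos (n := m) hΔ
        have hzΔ : (0:ℝ) < z ^ Δ := Real.rpow_pos_of_pos hz0 Δ
        positivity
      rw [abs_of_pos hpos]
    rw [Finset.sum_congr rfl e2, ← Finset.mul_sum]
    calc pp m Δ ^ 2 * (z ^ Δ * z ^ m) * ∑ ℓ ∈ range (m+1), |sTerm Δ ℓ (m-ℓ)|
        ≤ pp m Δ ^ 2 * (z ^ Δ * z ^ m) *
          ((4*((m:ℝ)+1)*(2*(m:ℝ)+1)/(min (2*Δ) 1)^2) * (4^m / ((2*m).factorial : ℝ))) := by
          apply mul_le_mul_of_nonneg_left (diag_abs_bound hΔ m)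
          have := pp_pos (n := m) hΔ
          have hzΔ : (0:ℝ) < z ^ Δ := Real.rpow_pos_of_pos hz0 Δ
          positivity
      _ = (4 * z ^ Δ / (min (2*Δ) 1)^2) *
          (((m:ℝ)+1)*(2*(m:ℝ)+1)*(pp m Δ)^2*4^m/((2*m).factorial : ℝ) * z^m) := by
          ring

lemma dTerm_hasSum (hΔ : 0 < Δ) (hz0 : 0 < z) (hz1 : z < 1) :
    HasSum (dTerm Δ z) (z ^ Δ) := by
  have hsummable : Summable (dTerm Δ z) := (dTerm_abs_summable hΔ hz0 hz1).of_abs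
  have hT := hsummable.hasSum
  have hsig : Summable (fun x : (Σ m : ℕ, (Finset.HasAntidiagonal.antidiagonal m : Finset (ℕ×ℕ))) =>
      dTerm Δ z (Finset.HasAntidiagonal.sigmaAntidiagonalEquivProd x)) :=
    Finset.HasAntidiagonal.sigmaAntidiagonalEquivProd.summable_iff.mpr hsummable
  have key : ∑' p, dTerm Δ z p = z ^ Δ := by
    rw [← Finset.HasAntidiagonal.sigmaAntidiagonalEquivProd.tsum_eq (dTerm Δ z)]
    rw [Summable.tsum_sigma' (fun m => (hasSum_fintype _).summable) hsig]
    have inner : ∀ m : ℕ, ∑' (c : (Finset.HasAntidiagonal.antidiagonal m : Finset (ℕ×ℕ))),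
        dTerm Δ z (Finset.HasAntidiagonal.sigmaAntidiagonalEquivProd ⟨m, c⟩)
        = if m = 0 then z ^ Δ else 0 := by
      intro m
      have e1 : ∑' (c : (Finset.HasAntidiagonal.antidiagonal m : Finset (ℕ×ℕ))),
            dTerm Δ z (Finset.HasAntidiagonal.sigmaAntidiagonalEquivProd ⟨m, c⟩)
          = ∑ p ∈ Finset.HasAntidiagonal.antidiagonal m, dTerm Δ z p := by
        rw [← Finset.tsum_subtype]
        rfl
      rw [e1, Finset.Nat.sum_antidiagonal_eq_sum_range_succ_mk]
      have e2 : ∀ ℓ ∈ range (m+1), dTerm Δ z (ℓ, m-ℓ)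
          = pp m Δ ^ 2 * (z ^ Δ * z ^ m) * sTerm Δ ℓ (m-ℓ) := by
        intro ℓ hℓ
        have hlm : ℓ ≤ m := Nat.lt_succ_iff.mp (mem_range.mp hℓ)
        have hadd : ℓ + (m-ℓ) = m := by omega
        rw [dTerm_eq hz0, hadd]
      rw [Finset.sum_congr rfl e2, ← Finset.mul_sum]
      cases m with
      | zero =>
        simp [sTerm_zero, pp_zero]
      | succ M =>
        rw [diag_sum_zero hΔ M]
        simp
    rw [tsum_congr inner, tsum_eq_single 0 (by intro m hm; simp [hm])]
    simp
  rwa [key] at hT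

end Assembly

/-- Alternating 1d MFT identity. -/
theorem mft_alternating_sum (Δ : ℝ) (hΔ : 0 < Δ) (z : ℝ) (hz : z ∈ Set.Ioo (0:ℝ) 1) :
    HasSum (fun ℓ : ℕ =>
        (-1 : ℝ) ^ ℓ * ((ascPochhammer ℝ ℓ).eval Δ ^ 2 /
          (ℓ.factorial * (ascPochhammer ℝ ℓ).eval (ℓ + 2 * Δ - 1))) * sl2Block (Δ + ℓ) z)
      (z ^ Δ) := by
  obtain ⟨hz0, hz1⟩ := hz
  exact HasSum.prod_fiberwise (dTerm_hasSum hΔ hz0 hz1)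
    (fun ℓ => dTerm_fiber_hasSum hΔ hz0 hz1 ℓ)
end
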